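/- Let k be a field, V a nonzero k-vector space, and R a unital k-subalgebra of End_k(V). Suppose there exist a two-sided ideal I of R that is topologically nilpotent as a set, and a set Ω, such that R/I is isomorphic to the product algebra k^Ω as topological k-algebras, where R carries the subspace topology induced by the function topology, R/I the quotient topology, and k^Ω the product topology with each factor k discrete. Then R is triangularizable, and I = TNil(R), the set of topologically nilpotent elements of R. -/

import Mathlib

universe u v w

variable {k : Type u} [Field k]

/-- The function (finite/pointwise) topology on `End_k(V)`: the topology induced from the
product topology on `V → V` where `V` carries the discrete topology. -/
instance endFunctionTopology {V : Type v} [AddCommGroup V] [Module k V] :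
    TopologicalSpace (Module.End k V) :=
  TopologicalSpace.induced (fun T => (T : V → V))
    (@Pi.topologicalSpace V (fun _ => V) (fun _ => ⊥))

/-- The product topology on `Ω → k` where each factor `k` is discrete. -/
def discretePiTopology (Ω K : Type*) : TopologicalSpace (Ω → K) :=
  @Pi.topologicalSpace Ω (fun _ => K) (fun _ => ⊥)

/-- `seqProd f n = f (n-1) * ⋯ * f 1 * f 0`, the composition `Tₙ ⋯ T₂ T₁` of the first `n`
terms of the sequence `f` (and the identity for `n = 0`). -/
def seqProd {V : Type v} [AddCommGroup V] [Module k V]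
    (f : ℕ → Module.End k V) : ℕ → Module.End k V
  | 0 => 1
  | n + 1 => f n * seqProd f n

/-- A subset `X ⊆ End_k(V)` is topologically nilpotent if for every sequence of elements of
`X` and every finite-dimensional subspace `W` of `V`, some initial composition
`Tₙ ⋯ T₂ T₁` annihilates `W`. -/
def IsTopNilpotentSet {V : Type v} [AddCommGroup V] [Module k V]
    (X : Set (Module.End k V)) : Prop :=
  ∀ f : ℕ → Module.End k V, (∀ n, f n ∈ X) →
    ∀ W : Submodule k V, FiniteDimensional k ↥W →
      ∃ n : ℕ, 0 < n ∧ ∀ w ∈ W, seqProd f n w = 0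

section Aux

variable {V : Type v} [AddCommGroup V] [Module k V]

lemma seqProd_succ_apply (f : ℕ → Module.End k V) (n : ℕ) (x : V) :
    seqProd f (n + 1) x = f n (seqProd f n x) := by
  show (f n * seqProd f n) x = _
  rw [Module.End.mul_apply]

lemma seqProd_const (x : Module.End k V) : ∀ n, seqProd (fun _ => x) n = x ^ n
  | 0 => by rw [seqProd, pow_zero]
  | n + 1 => by rw [seqProd, seqProd_const x n, pow_succ']

noncomputable def chainG (E : Submodule k V → V) : Ordinal.{v} → V :=
  Ordinal.lt_wf.fix fun α ih => E (Submodule.span k (Set.range fun β : Set.Iio α => ih β.1 β.2))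

noncomputable def chainW (E : Submodule k V → V) (α : Ordinal.{v}) : Submodule k V :=
  Submodule.span k (chainG E '' Set.Iio α)

lemma chainG_eq (E : Submodule k V → V) (α : Ordinal.{v}) :
    chainG E α = E (chainW E α) := by
  have h : chainG E α
      = E (Submodule.span k (Set.range fun β : Set.Iio α => chainG E β.1)) := by
    conv_lhs => rw [chainG]
    rw [WellFounded.fix_eq]
    rfl
  rw [h, chainW, Set.image_eq_range]

end Aux

section Tri

variable {V : Type v} [AddCommGroup V] [Module k V]

theorem triangular_of_eigen (R : Subalgebra k (Module.End k V))
    (H : ∀ W : Submodule k V, (∀ T ∈ (R : Set (Module.End k V)), ∀ w ∈ W, T w ∈ W) → W ≠ ⊤ →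
      ∃ v, v ∉ W ∧ ∀ T ∈ (R : Set (Module.End k V)), ∃ c : k, T v - c • v ∈ W) :
    ∃ (ι : Type v) (lo : LinearOrder ι), WellFounded lo.lt ∧
      ∃ b : Module.Basis ι k V, ∀ T ∈ (R : Set (Module.End k V)), ∀ i : ι,
        T (b i) ∈ Submodule.span k (⇑b '' {j | lo.le j i}) := by
  classical
  let cond : Submodule k V → Prop := fun W =>
    (∀ T ∈ (R : Set (Module.End k V)), ∀ w ∈ W, T w ∈ W) ∧ W ≠ ⊤
  let E : Submodule k V → V := fun W => if h : cond W then (H W h.1 h.2).choose else 0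
  have hgw : ∀ α, chainG E α = E (chainW E α) := chainG_eq E
  have hmono : ∀ {β α : Ordinal.{v}}, β ≤ α → chainW E β ≤ chainW E α := by
    intro β α h
    exact Submodule.span_mono (Set.image_mono (Set.Iio_subset_Iio h))
  have hmem : ∀ {β α : Ordinal.{v}}, β < α → chainG E β ∈ chainW E α := fun {β α} h =>
    Submodule.subset_span ⟨β, h, rfl⟩
  have hspec : ∀ α, cond (chainW E α) →
      chainG E α ∉ chainW E α ∧ ∀ T ∈ (R : Set (Module.End k V)), ∃ c : k,
        T (chainG E α) - c • chainG E α ∈ chainW E α := by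
    intro α h
    have he : chainG E α = (H (chainW E α) h.1 h.2).choose := by
      rw [hgw α]; exact dif_pos h
    rw [he]
    exact (H (chainW E α) h.1 h.2).choose_spec
  have hzero : ∀ α, ¬ cond (chainW E α) → chainG E α = 0 := by
    intro α h; rw [hgw α]; exact dif_neg h
  have hinv : ∀ α, ∀ T ∈ (R : Set (Module.End k V)), ∀ w ∈ chainW E α, T w ∈ chainW E α := by
    intro α T hT w hw
    have hle : chainW E α ≤ Submodule.comap T (chainW E α) := by
      show Submodule.span k (chainG E '' Set.Iio α) ≤ _
      refine Submodule.span_le.mpr ?_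
      rintro _ ⟨β, hβ, rfl⟩
      show T (chainG E β) ∈ chainW E α
      by_cases hc : cond (chainW E β)
      · obtain ⟨c, hcc⟩ := (hspec β hc).2 T hT
        have h1 : T (chainG E β) = (T (chainG E β) - c • chainG E β) + c • chainG E β := by
          abel
        rw [h1]
        exact (chainW E α).add_mem (hmono hβ.le hcc) ((chainW E α).smul_mem c (hmem hβ))
      · rw [hzero β hc, map_zero]
        exact (chainW E α).zero_mem
    exact hle hw
  have hterm : ∃ α : Ordinal.{v}, chainW E α = ⊤ := by
    by_contra hc
    push_neg at hc
    have hinj : Function.Injective (chainG E) := by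
      intro α β hab
      by_contra hne
      rcases Ne.lt_or_gt hne with h | h
      · exact (hspec β ⟨hinv β, hc β⟩).1 (hab ▸ hmem h)
      · exact (hspec α ⟨hinv α, hc α⟩).1 (hab.symm ▸ hmem h)
    exact not_small_ordinal.{v, v} (small_of_injective hinj)
  obtain ⟨A0, hA0⟩ := hterm
  have hne : {α : Ordinal.{v} | chainW E α = ⊤}.Nonempty := ⟨A0, hA0⟩
  let lam : Ordinal.{v} := Ordinal.lt_wf.min {α | chainW E α = ⊤} hne
  have hlamtop : chainW E lam = ⊤ := Ordinal.lt_wf.min_mem _ hne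
  have hlt : ∀ β, β < lam → chainW E β ≠ ⊤ := fun β hβ ht =>
    Ordinal.lt_wf.not_lt_min _ ht hβ
  have hglam : ∀ β, β < lam → chainG E β ∉ chainW E β := fun β hβ =>
    (hspec β ⟨hinv β, hlt β hβ⟩).1
  let S : Set V := chainG E '' Set.Iio lam
  have hmemS : ∀ {β}, β < lam → chainG E β ∈ S := fun {β} h => ⟨β, h, rfl⟩
  have hidx0 : ∀ i : S, ∃ β, β < lam ∧ chainG E β = ↑i := by
    intro i
    obtain ⟨β, hβ, hgb⟩ := i.2
    exact ⟨β, hβ, hgb⟩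
  let idx : S → Ordinal.{v} := fun i => (hidx0 i).choose
  have hidxlt : ∀ i, idx i < lam := fun i => (hidx0 i).choose_spec.1
  have hidxg : ∀ i, chainG E (idx i) = ↑i := fun i => (hidx0 i).choose_spec.2
  have hgne : ∀ {β α}, β < α → α < lam → chainG E α ≠ chainG E β := by
    intro β α h hα he
    exact (hspec α ⟨hinv α, hlt α hα⟩).1 (he ▸ hmem h)
  have hidxinj : Function.Injective idx := by
    intro i j hij
    apply Subtype.ext
    rw [← hidxg i, ← hidxg j, hij]
  have hidx_g : ∀ (β) (h : β < lam), idx ⟨chainG E β, hmemS h⟩ = β := by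
    intro β h
    have hh : chainG E (idx ⟨chainG E β, hmemS h⟩) = chainG E β := hidxg _
    rcases lt_trichotomy (idx ⟨chainG E β, hmemS h⟩) β with hl | he | hgt
    · exact absurd hh.symm (hgne hl h)
    · exact he
    · exact absurd hh (hgne hgt (hidxlt _))
  let lo : LinearOrder S := LinearOrder.lift' idx hidxinj
  have hwf : WellFounded lo.lt := InvImage.wf idx Ordinal.lt_wf
  have hli : LinearIndependent k (fun i : S => (i : V)) := by
    rw [linearIndependent_iff']
    intro s c hsum i hi
    by_contra hci
    set t := s.filter (fun j => c j ≠ 0) with ht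
    have hti : i ∈ t := Finset.mem_filter.mpr ⟨hi, hci⟩
    obtain ⟨j0, hj0t, hj0max⟩ := t.exists_max_image idx ⟨i, hti⟩
    have hsum' : ∑ j ∈ t, c j • (j : V) = 0 := by
      rw [ht]
      rw [Finset.sum_filter_of_ne (by intro x _ hne hc0; exact hne (by rw [hc0, zero_smul]))]
      exact hsum
    have hsplit : c j0 • (j0 : V) + ∑ x ∈ t.erase j0, c x • (x : V) = 0 :=
      (Finset.add_sum_erase t (fun x => c x • (x : V)) hj0t).trans hsum'
    have hWj : ∑ x ∈ t.erase j0, c x • (x : V) ∈ chainW E (idx j0) := by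
      refine Submodule.sum_mem _ ?_
      intro x hx
      refine Submodule.smul_mem _ _ ?_
      have hxt := Finset.mem_of_mem_erase hx
      have hxne := Finset.ne_of_mem_erase hx
      have hlt' : idx x < idx j0 :=
        lt_of_le_of_ne (hj0max x hxt) (fun hh => hxne (hidxinj hh))
      have hmm := hmem hlt'
      rwa [hidxg x] at hmm
    have hc0 : c j0 ≠ 0 := (Finset.mem_filter.mp hj0t).2
    have hin : (j0 : V) ∈ chainW E (idx j0) := by
      have h1 : c j0 • (j0 : V) = - ∑ x ∈ t.erase j0, c x • (x : V) :=
        eq_neg_of_add_eq_zero_left hsplit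
      have h2 : (j0 : V) = (c j0)⁻¹ • (c j0 • (j0 : V)) := (inv_smul_smul₀ hc0 _).symm
      rw [h2, h1]
      exact Submodule.smul_mem _ _ (Submodule.neg_mem _ hWj)
    have hnot : (j0 : V) ∉ chainW E (idx j0) := by
      have := hglam (idx j0) (hidxlt j0)
      rwa [hidxg j0] at this
    exact hnot hin
  have hsp : ⊤ ≤ Submodule.span k (Set.range fun i : S => (i : V)) := by
    have h1 : (Set.range fun i : S => (i : V)) = S := Subtype.range_coe
    rw [h1, ← hlamtop]
    exact le_of_eq rfl
  let b : Module.Basis S k V := Module.Basis.mk hli hsp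
  have hbv : ∀ j : S, b j = (j : V) := fun j => Module.Basis.mk_apply hli hsp j
  refine ⟨S, lo, hwf, b, ?_⟩
  intro T hT i
  obtain ⟨c, hc⟩ := (hspec (idx i) ⟨hinv _, hlt _ (hidxlt i)⟩).2 T hT
  rw [hidxg i] at hc
  have hsub : chainW E (idx i) ≤ Submodule.span k (⇑b '' {j | lo.le j i}) := by
    show Submodule.span k (chainG E '' Set.Iio (idx i)) ≤ _
    refine Submodule.span_le.mpr ?_
    rintro _ ⟨β, hβ, rfl⟩
    have hβlam : β < lam := hβ.trans (hidxlt i)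
    refine Submodule.subset_span ⟨⟨chainG E β, hmemS hβlam⟩, ?_, hbv _⟩
    show idx ⟨chainG E β, hmemS hβlam⟩ ≤ idx i
    rw [hidx_g β hβlam]
    exact hβ.le
  have heq : T (b i) = (T ((i : V)) - c • (i : V)) + c • b i := by
    rw [hbv i]; abel
  rw [heq]
  refine Submodule.add_mem _ (hsub hc) (Submodule.smul_mem _ _ ?_)
  exact Submodule.subset_span ⟨i, le_refl (idx i), rfl⟩

end Tri

set_option maxHeartbeats 1000000 in
set_option synthInstance.maxHeartbeats 100000 in
/-- if `R` is a unital `k`-subalgebra of `End_k(V)` with a topologically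
nilpotent two-sided ideal `I` such that `R/I ≅ k^Ω` as topological `k`-algebras (here
witnessed by a surjective, continuous, open `k`-algebra homomorphism `φ : R → k^Ω` with
kernel `I`, `R` carrying the topology induced by the function topology and `k^Ω` the
product topology with `k` discrete), then `R` is triangularizable and `I = TNil(R)`. -/
theorem stmt_14 {V : Type v} [AddCommGroup V] [Module k V] [Nontrivial V]
    (R : Subalgebra k (Module.End k V)) (I : TwoSidedIdeal R)
    (hI : IsTopNilpotentSet
      {T : Module.End k V | ∃ S : R, S ∈ I ∧ (S : Module.End k V) = T})
    (Ω : Type w) (φ : R →ₐ[k] (Ω → k))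
    (hsurj : Function.Surjective ⇑φ)
    (hker : ∀ x : R, φ x = 0 ↔ x ∈ I)
    (hcont : @Continuous ↥R (Ω → k) inferInstance (discretePiTopology Ω k) ⇑φ)
    (hopen : @IsOpenMap ↥R (Ω → k) inferInstance (discretePiTopology Ω k) ⇑φ) :
    (∃ (ι : Type v) (lo : LinearOrder ι), WellFounded lo.lt ∧
      ∃ b : Module.Basis ι k V, ∀ T ∈ (R : Set (Module.End k V)), ∀ i : ι,
        T (b i) ∈ Submodule.span k (⇑b '' {j | lo.le j i})) ∧
    (∀ x : R, x ∈ I ↔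
      ∀ v : V, ∃ m : ℕ, 0 < m ∧ ((x : Module.End k V) ^ m) v = 0) := by
  classical
  -- members of I are pointwise nilpotent
  have hpow : ∀ x : ↥R, x ∈ I → ∀ vv : V, ∃ m : ℕ, 0 < m ∧
      ((x : Module.End k V) ^ m) vv = 0 := by
    intro x hx vv
    obtain ⟨n, hn, h0⟩ := hI (fun _ => (x : Module.End k V)) (fun _ => ⟨x, hx, rfl⟩)
      (Submodule.span k {vv}) (FiniteDimensional.span_of_finite k (Set.finite_singleton vv))
    refine ⟨n, hn, ?_⟩
    have h1 := h0 vv (Submodule.mem_span_singleton_self vv)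
    rwa [seqProd_const] at h1
  -- Lemma A: below any proper subspace there is a vector killed into it by all of I
  have hA : ∀ Wm : Submodule k V, Wm ≠ ⊤ → ∃ v0, v0 ∉ Wm ∧
      ∀ x : ↥R, x ∈ I → (x : Module.End k V) v0 ∈ Wm := by
    intro Wm hWm
    by_contra hcon
    push_neg at hcon
    have hc : ∀ v0 : V, v0 ∉ Wm → ∃ T : Module.End k V,
        (∃ S : ↥R, S ∈ I ∧ (S : Module.End k V) = T) ∧ T v0 ∉ Wm := by
      intro v0 hv0
      obtain ⟨x, hxI, hxv⟩ := hcon v0 hv0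
      exact ⟨(x : Module.End k V), ⟨x, hxI, rfl⟩, hxv⟩
    obtain ⟨v0, hv0⟩ : ∃ v0, v0 ∉ Wm := by
      by_contra hall
      push_neg at hall
      exact hWm (Submodule.eq_top_iff'.mpr hall)
    let step : {v : V // v ∉ Wm} → {v : V // v ∉ Wm} := fun p =>
      ⟨(hc p.1 p.2).choose p.1, (hc p.1 p.2).choose_spec.2⟩
    let vs : ℕ → {v : V // v ∉ Wm} := fun n => Nat.rec ⟨v0, hv0⟩ (fun _ p => step p) n
    let f : ℕ → Module.End k V := fun n => (hc (vs n).1 (vs n).2).choose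
    have hfI : ∀ n, f n ∈ {T : Module.End k V | ∃ S : ↥R, S ∈ I ∧ (S : Module.End k V) = T} :=
      fun n => (hc (vs n).1 (vs n).2).choose_spec.1
    have hseq : ∀ n, seqProd f n v0 = (vs n).1 := by
      intro n
      induction n with
      | zero => rfl
      | succ n ih =>
        rw [seqProd_succ_apply, ih]
    obtain ⟨n, _, h0⟩ := hI f hfI (Submodule.span k {v0})
      (FiniteDimensional.span_of_finite k (Set.finite_singleton v0))
    have h1 := h0 v0 (Submodule.mem_span_singleton_self v0)
    rw [hseq n] at h1
    exact (vs n).2 (by rw [h1]; exact Submodule.zero_mem Wm)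
  -- basic neighborhoods of 0 in R
  have hBasic : ∀ s : Set ↥R, IsOpen s → (0 : ↥R) ∈ s →
      ∃ F : Finset V, ∀ S : ↥R, (∀ v ∈ F, (S : Module.End k V) v = 0) → S ∈ s := by
    intro s hs h0
    letI : TopologicalSpace V := ⊥
    haveI : DiscreteTopology V := ⟨rfl⟩
    obtain ⟨s1, hs1, rfl⟩ := isOpen_induced_iff.mp hs
    obtain ⟨s2, hs2, rfl⟩ := isOpen_induced_iff.mp hs1
    obtain ⟨F, uu, hFu, hsub⟩ := isOpen_pi_iff.mp hs2 _ h0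
    refine ⟨F, fun S hS => ?_⟩
    apply hsub
    rw [Set.mem_pi]
    intro a ha
    have h2 := (hFu a ha).2
    show (S : Module.End k V) a ∈ uu a
    rw [hS a ha]
    simpa using h2
  -- topologically nilpotent elements lie in I
  have hTN : ∀ x : ↥R, (∀ vv : V, ∃ m : ℕ, 0 < m ∧ ((x : Module.End k V) ^ m) vv = 0) →
      x ∈ I := by
    intro x hx
    rw [← hker]
    funext ω
    show φ x ω = 0
    letI : TopologicalSpace k := ⊥
    haveI : DiscreteTopology k := ⟨rfl⟩
    have hU : @IsOpen (Ω → k) (discretePiTopology Ω k) {y | y ω = 0} := by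
      have hcω : Continuous fun y : Ω → k => y ω := continuous_apply ω
      exact hcω.isOpen_preimage {0} (isOpen_discrete _)
    have hopenpre : IsOpen (⇑φ ⁻¹' {y | y ω = 0}) := hcont.isOpen_preimage _ hU
    have h0mem : (0 : ↥R) ∈ ⇑φ ⁻¹' {y | y ω = 0} := by
      simp [Set.mem_preimage, map_zero]
    obtain ⟨F, hF⟩ := hBasic _ hopenpre h0mem
    set M : ℕ := F.sup (fun vv => (hx vv).choose) + 1 with hM
    have hM0 : M ≠ 0 := Nat.succ_ne_zero _
    have hkill : ∀ vv ∈ F, ((x : Module.End k V) ^ M) vv = 0 := by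
      intro vv hv
      obtain ⟨hm0, hmv⟩ := (hx vv).choose_spec
      have hle : (hx vv).choose ≤ M := le_trans (Finset.le_sup (f := fun vv => (hx vv).choose) hv) (Nat.le_succ _)
      obtain ⟨d, hd⟩ := Nat.exists_eq_add_of_le hle
      rw [hd, add_comm, pow_add, Module.End.mul_apply, hmv, map_zero]
    have hmem : x ^ M ∈ ⇑φ ⁻¹' {y | y ω = 0} := by
      apply hF
      intro vv hv
      rw [SubmonoidClass.coe_pow]
      exact hkill vv hv
    have h1 : φ (x ^ M) ω = 0 := hmem
    rw [map_pow, Pi.pow_apply] at h1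
    exact pow_eq_zero_iff hM0 |>.mp h1
  -- the eigenvector lemma
  have hEigen : ∀ Wm : Submodule k V,
      (∀ T ∈ (R : Set (Module.End k V)), ∀ w ∈ Wm, T w ∈ Wm) → Wm ≠ ⊤ →
      ∃ v, v ∉ Wm ∧ ∀ T ∈ (R : Set (Module.End k V)), ∃ c : k, T v - c • v ∈ Wm := by
    intro Wm hWinv hWtop
    letI : TopologicalSpace k := ⊥
    haveI : DiscreteTopology k := ⟨rfl⟩
    obtain ⟨v0, hv0, hIv0⟩ := hA Wm hWtop
    set A : Set ↥R := {S : ↥R | (S : Module.End k V) v0 ∈ Wm} with hAdef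
    have hAopen : IsOpen A := by
      letI : TopologicalSpace V := ⊥
      haveI : DiscreteTopology V := ⟨rfl⟩
      have hcv : Continuous fun S : ↥R => (S : Module.End k V) v0 := by
        have hc1 : Continuous (fun S : ↥R => (S : Module.End k V)) := continuous_subtype_val
        have hc2 : Continuous (fun T : Module.End k V => (T : V → V)) := continuous_induced_dom
        exact (continuous_apply v0).comp (hc2.comp hc1)
      exact hcv.isOpen_preimage _ (isOpen_discrete (Wm : Set V))
    have hJopen : @IsOpen _ (discretePiTopology Ω k) (⇑φ '' A) := hopen A hAopen
    have hJ0 : (0 : Ω → k) ∈ ⇑φ '' A :=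
      ⟨0, by simp [hAdef], map_zero φ⟩
    obtain ⟨F, uu, hFu, hsub⟩ := isOpen_pi_iff.mp hJopen 0 hJ0
    have hJF : ∀ y : Ω → k, (∀ a ∈ F, y a = 0) → y ∈ ⇑φ '' A := by
      intro y hy
      apply hsub
      rw [Set.mem_pi]
      intro a ha
      have h2 := (hFu a ha).2
      have h3 : y a = (0 : Ω → k) a := by rw [hy a ha]; rfl
      exact h3 ▸ h2
    have hJadd : ∀ y z : Ω → k, y ∈ ⇑φ '' A → z ∈ ⇑φ '' A → y + z ∈ ⇑φ '' A := by
      rintro _ _ ⟨S1, hS1, rfl⟩ ⟨S2, hS2, rfl⟩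
      refine ⟨S1 + S2, ?_, map_add φ S1 S2⟩
      have : ((S1 + S2 : ↥R) : Module.End k V) v0
          = (S1 : Module.End k V) v0 + (S2 : Module.End k V) v0 := rfl
      show ((S1 + S2 : ↥R) : Module.End k V) v0 ∈ Wm
      rw [this]
      exact Submodule.add_mem _ hS1 hS2
    have hJ1 : (1 : Ω → k) ∉ ⇑φ '' A := by
      rintro ⟨S1, hS1A, hS1⟩
      have hxI : S1 - 1 ∈ I := by
        rw [← hker, map_sub, map_one, hS1, sub_self]
      set xE : Module.End k V := ((S1 - 1 : ↥R) : Module.End k V) with hxE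
      have hxmem : xE ∈ (R : Set (Module.End k V)) := (S1 - 1 : ↥R).2
      have hsv : v0 + xE v0 ∈ Wm := by
        have h5 : (S1 : Module.End k V) v0 ∈ Wm := hS1A
        have he : (S1 : Module.End k V) v0 = v0 + xE v0 := by
          have : xE = (S1 : Module.End k V) - 1 := rfl
          rw [this]
          simp [LinearMap.sub_apply]
        rwa [he] at h5
      have hind : ∀ n : ℕ, v0 - ((-xE) ^ n) v0 ∈ Wm := by
        intro n
        induction n with
        | zero => simpa using Submodule.zero_mem Wm
        | succ n ih =>
          have hstep := hWinv xE hxmem _ ih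
          have heq : v0 - ((-xE) ^ (n + 1)) v0
              = (v0 + xE v0) - xE (v0 - ((-xE) ^ n) v0) := by
            rw [pow_succ']
            simp only [Module.End.mul_apply, LinearMap.neg_apply, map_sub]
            abel
          rw [heq]
          exact Submodule.sub_mem _ hsv hstep
      obtain ⟨m, hm, hmv⟩ := hpow (S1 - 1) hxI v0
      have hzero : ((-xE) ^ m) v0 = 0 := by
        rw [neg_pow, Module.End.mul_apply]
        have : (xE ^ m) v0 = 0 := hmv
        rw [this, map_zero]
      have h6 := hind m
      rw [hzero, sub_zero] at h6
      exact hv0 h6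
    have hωex : ∃ ω1 ∈ F, Pi.single ω1 (1 : k) ∉ ⇑φ '' A := by
      by_contra hall
      push_neg at hall
      have hsum : ∑ a ∈ F, Pi.single a (1 : k) ∈ ⇑φ '' A :=
        Finset.sum_induction _ (fun y => y ∈ ⇑φ '' A) hJadd hJ0 hall
      have hrest : (1 : Ω → k) - ∑ a ∈ F, Pi.single a (1 : k) ∈ ⇑φ '' A := by
        apply hJF
        intro a ha
        simp [Finset.sum_pi_single', ha]
      have h1 : (1 : Ω → k) ∈ ⇑φ '' A := by
        have h2 := hJadd _ _ hrest hsum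
        simpa using h2
      exact hJ1 h1
    obtain ⟨ω1, hω1F, hω1⟩ := hωex
    obtain ⟨Tω, hTω⟩ := hsurj (Pi.single ω1 (1 : k))
    refine ⟨(Tω : Module.End k V) v0, ?_, ?_⟩
    · intro hmem
      exact hω1 ⟨Tω, hmem, hTω⟩
    · intro T hT
      refine ⟨φ ⟨T, hT⟩ ω1, ?_⟩
      set S : ↥R := ⟨T, hT⟩ with hSdef
      have hkermem : S * Tω - (φ S ω1) • Tω ∈ I := by
        rw [← hker, map_sub, map_mul, map_smul, hTω]
        funext a
        by_cases ha : a = ω1 <;>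
          simp [Pi.single_apply, ha, Pi.smul_apply, smul_eq_mul]
      have h7 := hIv0 _ hkermem
      have hco : ((S * Tω - (φ S ω1) • Tω : ↥R) : Module.End k V) v0
          = T ((Tω : Module.End k V) v0) - (φ S ω1) • (Tω : Module.End k V) v0 := rfl
      rw [hco] at h7
      exact h7
  exact ⟨triangular_of_eigen R hEigen, fun x => ⟨hpow x, hTN x⟩⟩
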